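/- Let H < G be countable groups with G ICC (every non-trivial conjugacy class of G is infinite) and [G : H] < ∞. If H has the non-factorizable regular character property, then G also has the non-factorizable regular character property. -/

import Mathlib

open scoped BigOperators ComplexOrder

/-- A character on a group `G`: a normalized, conjugation-invariant,
positive definite complex-valued function. -/
def IsCharacter {G : Type*} [Group G] (χ : G → ℂ) : Prop :=
  χ 1 = 1 ∧ (∀ g h : G, χ (h * g * h⁻¹) = χ g) ∧
    ∀ (n : ℕ) (g : Fin n → G) (α : Fin n → ℂ),
      0 ≤ ∑ i, ∑ j, (starRingEnd ℂ) (α i) * α j * χ ((g i)⁻¹ * g j)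

lemma IsCharacter.herm {G : Type*} [Group G] {χ : G → ℂ} (hχ : IsCharacter χ) (g : G) :
    χ g⁻¹ = (starRingEnd ℂ) (χ g) := by
  have h1 := hχ.2.2 2 ![1, g] ![1, 1]
  have h2 := hχ.2.2 2 ![1, g] ![1, Complex.I]
  simp [Fin.sum_univ_two, hχ.1, Complex.le_def] at h1 h2
  have e1 : (χ g).im + (χ g⁻¹).im = 0 := by
    have := h1.2
    linarith [this]
  have e2 : (χ g).re = (χ g⁻¹).re := by
    have := h2.2
    linarith [this]
  apply Complex.ext <;> simp [Complex.conj_re, Complex.conj_im]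
  · exact e2.symm
  · linarith

lemma IsCharacter.vanish {G : Type*} [Group G] {χ : G → ℂ} (hχ : IsCharacter χ)
    {a : ℂ} (u : ℕ → G) (ha : ∀ n, χ (u n) = a)
    (h0 : ∀ m n : ℕ, m ≠ n → χ ((u m)⁻¹ * u n) = 0) : a = 0 := by
  by_contra hne
  have hpos : 0 < Complex.normSq a := Complex.normSq_pos.2 hne
  obtain ⟨n, hn⟩ := exists_nat_gt (1 / Complex.normSq a)
  have key : (n : ℝ) * Complex.normSq a ≤ 1 := by
    have h := hχ.2.2 (n + 1) (Fin.cons 1 (fun i : Fin n => u i))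
      (Fin.cons 1 (fun _ : Fin n => -(starRingEnd ℂ) a))
    have hcross : ∀ i j : Fin n, χ ((u (i:ℕ))⁻¹ * u (j:ℕ)) = if i = j then 1 else 0 := by
      intro i j
      by_cases hij : i = j
      · simp [hij, hχ.1]
      · rw [if_neg hij]; exact h0 _ _ (fun hc => hij (Fin.ext hc))
    simp only [Fin.sum_univ_succ, Fin.cons_zero, Fin.cons_succ, map_one, map_neg,
      Complex.conj_conj, one_mul, inv_one, mul_one, hχ.1, hχ.herm, ha, hcross, mul_ite,
      mul_one, mul_zero, neg_mul_neg, neg_add_cancel, neg_mul, neg_neg, Finset.sum_ite_eq, Finset.mem_univ, if_pos,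
      Finset.sum_const, Finset.card_univ, Fintype.card_fin, nsmul_eq_mul] at h
    rw [Complex.le_def] at h
    simp only [Complex.add_re, Complex.one_re, Complex.mul_re, Complex.neg_re,
      Complex.neg_im, Complex.conj_re, Complex.conj_im, Complex.natCast_re,
      Complex.natCast_im, Complex.zero_re] at h
    have := h.1
    simp [Complex.normSq_apply]
    nlinarith [this]
  rw [div_lt_iff₀ hpos] at hn
  linarith

lemma IsCharacter.restrict {G : Type*} [Group G] (H : Subgroup G) {χ : G → ℂ}
    (hχ : IsCharacter χ) : IsCharacter (fun h : H => χ (h : G)) := by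
  refine ⟨by simpa using hχ.1, ?_, ?_⟩
  · intro g h
    have := hχ.2.1 (g : G) (h : G)
    simpa using this
  · intro n g α
    have := hχ.2.2 n (fun i => (g i : G)) α
    simpa using this

open scoped Classical in
lemma key_delta {G : Type*} [Group G] (H : Subgroup G)
    (hICC : ∀ g : G, g ≠ 1 → {x : G | IsConj g x}.Infinite)
    (hfin : H.FiniteIndex) {χ : G → ℂ} (hχ : IsCharacter χ)
    (hvan : ∀ h : H, h ≠ 1 → χ (h : G) = 0) :
    χ = fun g => if g = 1 then 1 else 0 := by
  funext g
  by_cases hg : g = 1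
  · simp [hg, hχ.1]
  · rw [if_neg hg]
    have hC : {x : G | IsConj g x}.Infinite := hICC g hg
    -- pigeonhole into G ⧸ H
    haveI : Finite (G ⧸ H) := Subgroup.finite_quotient_of_finiteIndex
    haveI : Infinite {x : G | IsConj g x} := hC.to_subtype
    obtain ⟨q, hq⟩ := Finite.exists_infinite_fiber
      (fun x : {x : G | IsConj g x} => (QuotientGroup.mk (x : G) : G ⧸ H))
    haveI := hq
    let e : ℕ ↪ _ := Infinite.natEmbedding ((fun x : {x : G | IsConj g x} =>
      (QuotientGroup.mk (x : G) : G ⧸ H)) ⁻¹' {q})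
    set u : ℕ → G := fun n => ((e n : {x : G | IsConj g x}) : G) with hu
    have hconj : ∀ n, IsConj g (u n) := fun n => (e n : {x : G | IsConj g x}).2
    have huinj : Function.Injective u := by
      intro m n hmn
      exact e.injective (Subtype.ext (Subtype.ext hmn))
    have hmem : ∀ n, (QuotientGroup.mk (u n) : G ⧸ H) = q := fun n => (e n).2
    refine hχ.vanish u (fun n => ?_) (fun m n hmn => ?_)
    · obtain ⟨c, hc⟩ := (isConj_iff).1 (hconj n)
      rw [← hc, hχ.2.1]
    · have hH' : (u m)⁻¹ * u n ∈ H := by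
        rw [← QuotientGroup.eq]
        rw [hmem m, hmem n]
      have hne1 : (u m)⁻¹ * u n ≠ 1 := by
        intro hcon
        exact hmn (huinj (by rw [inv_mul_eq_one] at hcon; exact hcon))
      exact hvan ⟨_, hH'⟩ (fun hc => hne1 (by simpa using congrArg Subtype.val hc))

open scoped Classical in
/-- The regular character of `G` is non-factorizable: whenever two characters
`φ, ψ` satisfy `φ s * ψ s = 0` for every `s ≠ 1`, one of them is `δ_e`. -/
def HasNonfactorizableRegularCharacter (G : Type*) [Group G] : Prop :=
  ∀ φ ψ : G → ℂ, IsCharacter φ → IsCharacter ψ →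
    (∀ s : G, s ≠ 1 → φ s * ψ s = 0) →
    (φ = fun g => if g = 1 then 1 else 0) ∨ (ψ = fun g => if g = 1 then 1 else 0)

theorem nfrc_of_finiteIndex_subgroup
    {G : Type*} [Group G] [Countable G] (H : Subgroup G)
    (hICC : ∀ g : G, g ≠ 1 → {x : G | IsConj g x}.Infinite)
    (hfin : H.FiniteIndex)
    (hH : HasNonfactorizableRegularCharacter H) :
    HasNonfactorizableRegularCharacter G := by
  intro φ ψ hφ hψ horth
  have hφH : IsCharacter (fun h : H => φ (h : G)) := hφ.restrict H
  have hψH : IsCharacter (fun h : H => ψ (h : G)) := hψ.restrict H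
  have horthH : ∀ s : H, s ≠ 1 → φ (s : G) * ψ (s : G) = 0 := by
    intro s hs
    exact horth (s : G) (fun hc => hs (by exact_mod_cast hc))
  rcases hH _ _ hφH hψH horthH with hd | hd
  · left
    refine key_delta H hICC hfin hφ (fun h hh => ?_)
    have := congrFun hd h
    simpa [hh] using this
  · right
    refine key_delta H hICC hfin hψ (fun h hh => ?_)
    have := congrFun hd h
    simpa [hh] using this
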